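/- Let $V$ be a $k$-dimensional vector space with two decreasing exhaustive filtrations $V(-aP)$ and $V(-bQ)$ with vanishing sequences $a_1 \leq \dots \leq a_k$ and $b_1 \leq \dots \leq b_k$ respectively. Then there exists a basis $s_1,\dots,s_k$ of $V$ which is simultaneously adapted, i.e., $\mathrm{ord}_P(s_i) = a_i$ and $\mathrm{ord}_Q(s_i) = b_{k+1-i}$ for all $i$, if and only if for all $a,b \geq 0$ one has $\dim(V(-aP) \cap V(-bQ)) = \#\{i : a_i \geq a \text{ and } b_{k+1-i} \geq b\}$. -/

import Mathlib

/-- Proposition `adapted`: a `k`-dimensional vector space with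
two decreasing exhaustive filtrations admits a simultaneously adapted basis
(`ord_P(s_i) = a_i` and `ord_Q(s_i) = b_{k+1-i}`) if and only if for all `a, b`,
`dim (V(-aP) ⊓ V(-bQ)) = #{i : a_i ≥ a and b_{k+1-i} ≥ b}`. -/
theorem stmt_3 (K V : Type*) [Field K] [AddCommGroup V] [Module K V]
    [FiniteDimensional K V]
    (k : ℕ) (hk : Module.finrank K V = k)
    (FP FQ : ℕ → Submodule K V)
    (hP0 : FP 0 = ⊤) (hQ0 : FQ 0 = ⊤)
    (hPmono : Antitone FP) (hQmono : Antitone FQ)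
    (hPbot : ∃ N, FP N = ⊥) (hQbot : ∃ N, FQ N = ⊥)
    (aseq bseq : Fin k → ℕ) (haseqmono : Monotone aseq) (hbseqmono : Monotone bseq)
    (haseq : ∀ m : ℕ, (Finset.univ.filter fun i : Fin k => m ≤ aseq i).card
        = Module.finrank K (FP m))
    (hbseq : ∀ m : ℕ, (Finset.univ.filter fun i : Fin k => m ≤ bseq i).card
        = Module.finrank K (FQ m)) :
    (∃ s : Module.Basis (Fin k) K V, ∀ i : Fin k,
        (s i ∈ FP (aseq i) ∧ s i ∉ FP (aseq i + 1)) ∧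
        (s i ∈ FQ (bseq i.rev) ∧ s i ∉ FQ (bseq i.rev + 1))) ↔
    (∀ a b : ℕ,
      Module.finrank K ↥(FP a ⊓ FQ b)
        = (Finset.univ.filter fun i : Fin k => a ≤ aseq i ∧ b ≤ bseq i.rev).card) := by
  classical
  -- `bseq` card condition, reindexed through `Fin.rev`
  have hbseq' : ∀ m : ℕ, (Finset.univ.filter fun i : Fin k => m ≤ bseq i.rev).card
      = Module.finrank K (FQ m) := by
    intro m
    rw [← hbseq m]
    have himg : (Finset.univ.filter fun i : Fin k => m ≤ bseq i.rev)
        = (Finset.univ.filter fun i : Fin k => m ≤ bseq i).image Fin.rev := by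
      ext j
      simp only [Finset.mem_image, Finset.mem_filter, Finset.mem_univ, true_and]
      constructor
      · intro h; exact ⟨j.rev, h, Fin.rev_rev j⟩
      · rintro ⟨i, hi, rfl⟩; simpa [Fin.rev_rev] using hi
    rw [himg, Finset.card_image_of_injective _ Fin.rev_injective]
  constructor
  · -- forward direction
    rintro ⟨s, hs⟩ a b
    -- rank of spans of sub-families of the basis
    have hrk : ∀ T : Finset (Fin k),
        Module.finrank K (Submodule.span K (s '' ↑T)) = T.card := by
      intro T
      have himg : (s '' ↑T) = ((T.image s : Finset V) : Set V) :=
        (Finset.coe_image).symm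
      rw [himg, finrank_span_finset_eq_card, Finset.card_image_of_injective _ s.injective]
      refine ((linearIndepOn_id_range_iff s.injective).mpr s.linearIndependent).mono ?_
      intro x hx
      rcases Finset.mem_image.mp (Finset.mem_coe.mp hx) with ⟨i, _, rfl⟩
      exact Set.mem_range_self i
    -- each filtration step is the span of the adapted part of the basis
    have hspan : ∀ (F : ℕ → Submodule K V) (c : Fin k → ℕ),
        Antitone F → (∀ i, s i ∈ F (c i)) →
        (∀ m, (Finset.univ.filter fun i : Fin k => m ≤ c i).card = Module.finrank K (F m)) →
        ∀ m, F m = Submodule.span K (s '' {i | m ≤ c i}) := by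
      intro F c hmono hmem hcard m
      have hset : {i : Fin k | m ≤ c i}
          = ((Finset.univ.filter fun i : Fin k => m ≤ c i : Finset (Fin k)) : Set (Fin k)) := by
        ext i; simp
      have hle : Submodule.span K (s '' {i | m ≤ c i}) ≤ F m := by
        rw [Submodule.span_le]
        rintro x ⟨i, hi, rfl⟩
        exact hmono (hi : m ≤ c i) (hmem i)
      refine (Submodule.eq_of_le_of_finrank_le hle ?_).symm
      rw [hset, hrk]
      exact (hcard m).ge
    have hPa := hspan FP aseq hPmono (fun i => (hs i).1.1) haseq a
    have hQb := hspan FQ (fun i => bseq i.rev) hQmono (fun i => (hs i).2.1) hbseq' b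
    have hint : Submodule.span K (s '' {i | a ≤ aseq i}) ⊓
        Submodule.span K (s '' {i | b ≤ bseq i.rev})
        = Submodule.span K (s '' ({i | a ≤ aseq i} ∩ {i | b ≤ bseq i.rev})) := by
      ext x
      simp only [Submodule.mem_inf, Module.Basis.mem_span_image, Set.subset_inter_iff]
    have hset2 : ({i : Fin k | a ≤ aseq i} ∩ {i | b ≤ bseq i.rev})
        = ((Finset.univ.filter fun i : Fin k => a ≤ aseq i ∧ b ≤ bseq i.rev : Finset (Fin k))
            : Set (Fin k)) := by
      ext i; simp
    rw [hPa, hQb, hint, hset2, hrk]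
  · -- backward direction
    intro hdim
    obtain ⟨NP, hNP⟩ := hPbot
    obtain ⟨NQ, hNQ⟩ := hQbot
    set N := max NP NQ with hN
    have hFPN : FP N = ⊥ := le_bot_iff.mp (hNP ▸ hPmono (le_max_left _ _))
    have hFQN : FQ N = ⊥ := le_bot_iff.mp (hNQ ▸ hQmono (le_max_right _ _))
    have haLt : ∀ i, aseq i < N := by
      intro i
      by_contra h
      push_neg at h
      have h0 := haseq N
      rw [hFPN, finrank_bot] at h0
      have : i ∈ Finset.univ.filter fun i : Fin k => N ≤ aseq i := by
        simp [h]
      rw [Finset.card_eq_zero] at h0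
      simp [h0] at this
    have hbLt : ∀ i, bseq i < N := by
      intro i
      by_contra h
      push_neg at h
      have h0 := hbseq N
      rw [hFQN, finrank_bot] at h0
      have : i ∈ Finset.univ.filter fun i : Fin k => N ≤ bseq i := by
        simp [h]
      rw [Finset.card_eq_zero] at h0
      simp [h0] at this
    -- U is below W
    have hUle : ∀ a b : ℕ, (FP (a+1) ⊓ FQ b) ⊔ (FP a ⊓ FQ (b+1)) ≤ FP a ⊓ FQ b := by
      intro a b
      apply sup_le
      · exact inf_le_inf (hPmono (Nat.le_succ a)) le_rfl
      · exact inf_le_inf le_rfl (hQmono (Nat.le_succ b))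
    -- intersection of the two "next" pieces
    have hWinf : ∀ a b : ℕ, (FP (a+1) ⊓ FQ b) ⊓ (FP a ⊓ FQ (b+1)) = FP (a+1) ⊓ FQ (b+1) := by
      intro a b
      ext x
      simp only [Submodule.mem_inf]
      constructor
      · rintro ⟨⟨h1, _⟩, ⟨_, h4⟩⟩; exact ⟨h1, h4⟩
      · rintro ⟨h1, h2⟩
        exact ⟨⟨h1, hQmono (Nat.le_succ b) h2⟩, ⟨hPmono (Nat.le_succ a) h1, h2⟩⟩
    -- index set splitting
    have hTsplit : ∀ a b : ℕ,
        (Finset.univ.filter fun i : Fin k => a ≤ aseq i ∧ b ≤ bseq i.rev)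
        = (((Finset.univ.filter fun i : Fin k => a + 1 ≤ aseq i ∧ b ≤ bseq i.rev)
            ∪ (Finset.univ.filter fun i : Fin k => a ≤ aseq i ∧ b + 1 ≤ bseq i.rev))
          ∪ (Finset.univ.filter fun i : Fin k => aseq i = a ∧ bseq i.rev = b)) := by
      intro a b
      ext i
      simp only [Finset.mem_filter, Finset.mem_union, Finset.mem_univ, true_and]
      omega
    have hTinter : ∀ a b : ℕ,
        (Finset.univ.filter fun i : Fin k => a + 1 ≤ aseq i ∧ b ≤ bseq i.rev)
          ∩ (Finset.univ.filter fun i : Fin k => a ≤ aseq i ∧ b + 1 ≤ bseq i.rev)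
        = (Finset.univ.filter fun i : Fin k => a + 1 ≤ aseq i ∧ b + 1 ≤ bseq i.rev) := by
      intro a b
      ext i
      simp only [Finset.mem_filter, Finset.mem_inter, Finset.mem_univ, true_and]
      omega
    have hdisj : ∀ a b : ℕ,
        Disjoint ((Finset.univ.filter fun i : Fin k => a + 1 ≤ aseq i ∧ b ≤ bseq i.rev)
            ∪ (Finset.univ.filter fun i : Fin k => a ≤ aseq i ∧ b + 1 ≤ bseq i.rev))
          (Finset.univ.filter fun i : Fin k => aseq i = a ∧ bseq i.rev = b) := by
      intro a b
      rw [Finset.disjoint_left]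
      intro i hi hi'
      simp only [Finset.mem_filter, Finset.mem_union, Finset.mem_univ, true_and] at hi hi'
      omega
    -- rank of U
    have hcardU : ∀ a b : ℕ,
        Module.finrank K ↥((FP (a+1) ⊓ FQ b) ⊔ (FP a ⊓ FQ (b+1)))
        = ((Finset.univ.filter fun i : Fin k => a + 1 ≤ aseq i ∧ b ≤ bseq i.rev)
            ∪ (Finset.univ.filter fun i : Fin k => a ≤ aseq i ∧ b + 1 ≤ bseq i.rev)).card := by
      intro a b
      have h1 := Submodule.finrank_sup_add_finrank_inf_eq (FP (a+1) ⊓ FQ b) (FP a ⊓ FQ (b+1))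
      rw [hWinf a b] at h1
      have h2 := Finset.card_union_add_card_inter
        (Finset.univ.filter fun i : Fin k => a + 1 ≤ aseq i ∧ b ≤ bseq i.rev)
        (Finset.univ.filter fun i : Fin k => a ≤ aseq i ∧ b + 1 ≤ bseq i.rev)
      rw [hTinter a b] at h2
      have e1 := hdim (a+1) b
      have e2 := hdim a (b+1)
      have e3 := hdim (a+1) (b+1)
      omega
    -- rank relation for W
    have hWrank : ∀ a b : ℕ,
        Module.finrank K ↥(FP a ⊓ FQ b)
        = Module.finrank K ↥((FP (a+1) ⊓ FQ b) ⊔ (FP a ⊓ FQ (b+1)))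
          + (Finset.univ.filter fun i : Fin k => aseq i = a ∧ bseq i.rev = b).card := by
      intro a b
      rw [hdim a b, hcardU a b, hTsplit a b, Finset.card_union_of_disjoint (hdisj a b)]
    -- choose complements D of U inside W
    have hex : ∀ a b : ℕ, ∃ D : Submodule K V,
        D ⊔ ((FP (a+1) ⊓ FQ b) ⊔ (FP a ⊓ FQ (b+1))) = FP a ⊓ FQ b ∧
        D ⊓ ((FP (a+1) ⊓ FQ b) ⊔ (FP a ⊓ FQ (b+1))) = ⊥ ∧
        Module.finrank K ↥D
          = (Finset.univ.filter fun i : Fin k => aseq i = a ∧ bseq i.rev = b).card := by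
      intro a b
      set W := FP a ⊓ FQ b with hWd
      set U := (FP (a+1) ⊓ FQ b) ⊔ (FP a ⊓ FQ (b+1)) with hUd
      have hUleW : U ≤ W := hUle a b
      obtain ⟨D', hD'⟩ := Submodule.exists_isCompl (U.comap W.subtype)
      have hmapU : (U.comap W.subtype).map W.subtype = U := by
        rw [Submodule.map_comap_subtype]
        exact inf_eq_right.mpr hUleW
      refine ⟨D'.map W.subtype, ?_, ?_, ?_⟩
      · rw [← hmapU, ← Submodule.map_sup, sup_comm, hD'.sup_eq_top, Submodule.map_subtype_top]
      · rw [← hmapU, ← Submodule.map_inf _ (Submodule.injective_subtype W),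
          sup_comm] at *
        rw [inf_comm, hD'.inf_eq_bot, Submodule.map_bot]
      · have e1 : Module.finrank K ↥(D'.map W.subtype) = Module.finrank K ↥D' :=
          (Submodule.equivMapOfInjective W.subtype (Submodule.injective_subtype W) D').symm.finrank_eq
        have e2 : Module.finrank K ↥(U.comap W.subtype) = Module.finrank K ↥U :=
          (Submodule.comapSubtypeEquivOfLe hUleW).finrank_eq
        have e3 := Submodule.finrank_add_eq_of_isCompl hD'
        have e4 := hWrank a b
        rw [← hWd, ← hUd] at e4
        omega
    choose D hDsup hDinf hDrank using hex
    -- choose adapted families inside each D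
    have hbas : ∀ a b : ℕ, ∃ t : {i : Fin k //
          i ∈ Finset.univ.filter fun i : Fin k => aseq i = a ∧ bseq i.rev = b} → V,
        (∀ j, t j ∈ D a b) ∧ (∀ j, t j ≠ 0) ∧ Submodule.span K (Set.range t) = D a b := by
      intro a b
      have hB : Module.Basis ({i : Fin k //
          i ∈ Finset.univ.filter fun i : Fin k => aseq i = a ∧ bseq i.rev = b}) K ↥(D a b) :=
        (Module.finBasisOfFinrankEq K ↥(D a b) (hDrank a b)).reindex
          (Finset.univ.filter fun i : Fin k => aseq i = a ∧ bseq i.rev = b).equivFin.symm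
      refine ⟨fun j => ↑(hB j), fun j => (hB j).2, fun j => ?_, ?_⟩
      · intro h0
        exact hB.ne_zero j (Subtype.ext h0)
      · have : Set.range (fun j => ((hB j : ↥(D a b)) : V))
            = (D a b).subtype '' Set.range hB := by
          rw [← Set.range_comp]; rfl
        rw [this, ← Submodule.map_span, hB.span_eq, Submodule.map_subtype_top]
    choose t ht1 ht2 ht3 using hbas
    have hmemC : ∀ i : Fin k,
        i ∈ Finset.univ.filter fun j : Fin k => aseq j = aseq i ∧ bseq j.rev = bseq i.rev := by
      intro i; simp
    set s : Fin k → V := fun i => t (aseq i) (bseq i.rev) ⟨i, hmemC i⟩ with hsdef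
    have hsC : ∀ (a b : ℕ) (i : Fin k)
        (h : i ∈ Finset.univ.filter fun j : Fin k => aseq j = a ∧ bseq j.rev = b),
        s i = t a b ⟨i, h⟩ := by
      intro a b i h
      have h' := h
      simp only [Finset.mem_filter, Finset.mem_univ, true_and] at h'
      obtain ⟨ha, hb⟩ := h'
      subst ha; subst hb
      rfl
    have hDleW : ∀ a b : ℕ, D a b ≤ FP a ⊓ FQ b :=
      fun a b => le_trans le_sup_left (hDsup a b).le
    have hsD : ∀ i, s i ∈ D (aseq i) (bseq i.rev) := fun i => ht1 _ _ _
    have hsW : ∀ i, s i ∈ FP (aseq i) ⊓ FQ (bseq i.rev) := fun i => hDleW _ _ (hsD i)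
    have hsnotP : ∀ i, s i ∉ FP (aseq i + 1) := by
      intro i hmem
      have h1 : s i ∈ (FP (aseq i + 1) ⊓ FQ (bseq i.rev)) ⊔
          (FP (aseq i) ⊓ FQ (bseq i.rev + 1)) :=
        Submodule.mem_sup_left ⟨hmem, (Submodule.mem_inf.mp (hsW i)).2⟩
      have h2 : s i ∈ D (aseq i) (bseq i.rev) ⊓
          ((FP (aseq i + 1) ⊓ FQ (bseq i.rev)) ⊔ (FP (aseq i) ⊓ FQ (bseq i.rev + 1))) :=
        ⟨hsD i, h1⟩
      rw [hDinf] at h2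
      exact ht2 _ _ _ h2
    have hsnotQ : ∀ i, s i ∉ FQ (bseq i.rev + 1) := by
      intro i hmem
      have h1 : s i ∈ (FP (aseq i + 1) ⊓ FQ (bseq i.rev)) ⊔
          (FP (aseq i) ⊓ FQ (bseq i.rev + 1)) :=
        Submodule.mem_sup_right ⟨(Submodule.mem_inf.mp (hsW i)).1, hmem⟩
      have h2 : s i ∈ D (aseq i) (bseq i.rev) ⊓
          ((FP (aseq i + 1) ⊓ FQ (bseq i.rev)) ⊔ (FP (aseq i) ⊓ FQ (bseq i.rev + 1))) :=
        ⟨hsD i, h1⟩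
      rw [hDinf] at h2
      exact ht2 _ _ _ h2
    -- spanning by downward induction
    have hspan : ∀ n a b : ℕ, 2 * N ≤ a + b + n →
        Submodule.span K (s ''
          ↑(Finset.univ.filter fun i : Fin k => a ≤ aseq i ∧ b ≤ bseq i.rev))
        = FP a ⊓ FQ b := by
      intro n
      induction n with
      | zero =>
        intro a b hab
        have hTempty :
            (Finset.univ.filter fun i : Fin k => a ≤ aseq i ∧ b ≤ bseq i.rev) = ∅ := by
          rw [Finset.eq_empty_iff_forall_notMem]
          intro i hi
          simp only [Finset.mem_filter, Finset.mem_univ, true_and] at hi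
          have h1 := haLt i
          have h2 := hbLt i.rev
          omega
        have hWbot : FP a ⊓ FQ b = ⊥ := by
          rcases (by omega : N ≤ a ∨ N ≤ b) with h | h
          · exact le_bot_iff.mp (le_trans inf_le_left (hFPN ▸ hPmono h))
          · exact le_bot_iff.mp (le_trans inf_le_right (hFQN ▸ hQmono h))
        rw [hTempty, hWbot]
        simp
      | succ n ih =>
        intro a b hab
        have h1 := ih (a+1) b (by omega)
        have h2 := ih a (b+1) (by omega)
        have h3 : Submodule.span K (s ''
            ↑(Finset.univ.filter fun i : Fin k => aseq i = a ∧ bseq i.rev = b))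
            = D a b := by
          have himg : s '' ↑(Finset.univ.filter fun i : Fin k => aseq i = a ∧ bseq i.rev = b)
              = Set.range (t a b) := by
            ext x
            constructor
            · rintro ⟨i, hi, rfl⟩
              exact ⟨⟨i, hi⟩, (hsC a b i hi).symm⟩
            · rintro ⟨⟨i, hi⟩, rfl⟩
              exact ⟨i, hi, hsC a b i hi⟩
          rw [himg, ht3]
        rw [hTsplit a b, Finset.coe_union, Finset.coe_union, Set.image_union, Set.image_union,
          Submodule.span_union, Submodule.span_union, h1, h2, h3]
        rw [sup_comm]
        exact hDsup a b
    -- conclude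
    have h00 := hspan (2 * N) 0 0 (by omega)
    have hT00 : (Finset.univ.filter fun i : Fin k => 0 ≤ aseq i ∧ 0 ≤ bseq i.rev)
        = Finset.univ := by
      ext i; simp
    rw [hT00, hP0, hQ0, inf_idem] at h00
    have htop : ⊤ ≤ Submodule.span K (Set.range s) := by
      rw [← h00]
      simp
    have hcard : Fintype.card (Fin k) = Module.finrank K V := by simp [hk]
    refine ⟨basisOfTopLeSpanOfCardEqFinrank s htop hcard, ?_⟩
    intro i
    rw [coe_basisOfTopLeSpanOfCardEqFinrank]
    exact ⟨⟨(Submodule.mem_inf.mp (hsW i)).1, hsnotP i⟩,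
      ⟨(Submodule.mem_inf.mp (hsW i)).2, hsnotQ i⟩⟩
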